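/- A nonempty second-countable space X is a continuous open image of a π-space if and only if X is a continuous open image of a space that has a Lusin π-base. -/

import Mathlib

open Set Topology

namespace PiSpacePaper

/-- The restriction `p↾n` of `p : ℕ → ℕ`, as a list of length `n`. -/
def restrictSeq (p : ℕ → ℕ) (n : ℕ) : List ℕ := (List.range n).map p

/-- The basic clopen set `S_a` of the Baire space. -/
def cyl (a : List ℕ) : Set (ℕ → ℕ) := {p | restrictSeq p a.length = a}

/-- The fruit `⋂ n, V (p↾n)` of a branch `p` in a Souslin scheme `V`. -/
def fruit {X : Type*} (V : List ℕ → Set X) (p : ℕ → ℕ) : Set X :=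
  ⋂ n : ℕ, V (restrictSeq p n)

/-- A Souslin scheme `V` covers the set `s`. -/
def Covers {X : Type*} (V : List ℕ → Set X) (s : Set X) : Prop :=
  V [] = s ∧ ∀ a : List ℕ, V a = ⋃ n : ℕ, V (a ++ [n])

/-- A Souslin scheme `V` partitions the set `s`. -/
def Partitions {X : Type*} (V : List ℕ → Set X) (s : Set X) : Prop :=
  Covers V s ∧ ∀ (a : List ℕ) (n m : ℕ), n ≠ m → V (a ++ [n]) ∩ V (a ++ [m]) = ∅

/-- A Souslin scheme is complete iff all fruits are nonempty. -/
def Complete {X : Type*} (V : List ℕ → Set X) : Prop :=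
  ∀ p : ℕ → ℕ, (fruit V p).Nonempty

/-- A Souslin scheme has strict branches iff every fruit is a singleton. -/
def StrictBranches {X : Type*} (V : List ℕ → Set X) : Prop :=
  ∀ p : ℕ → ℕ, ∃ x : X, fruit V p = {x}

/-- A Souslin scheme is open iff all its members are open sets. -/
def OpenScheme {X : Type*} [TopologicalSpace X] (V : List ℕ → Set X) : Prop :=
  ∀ a : List ℕ, IsOpen (V a)

/-- `flesh V = ⋃ a, V a`. -/
def flesh {X : Type*} (V : List ℕ → Set X) : Set X := ⋃ a : List ℕ, V a

/-- `branches V x = {q ∈ ℕ^ℕ : x ∈ fruit V q}`. -/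
def branches {X : Type*} (V : List ℕ → Set X) (x : X) : Set (ℕ → ℕ) :=
  {q | x ∈ fruit V q}

/-- A family `γ` of subsets is a π-net for a space: all members are nonempty and every
nonempty open set contains a member. -/
def IsPiNet {X : Type*} [TopologicalSpace X] (γ : Set (Set X)) : Prop :=
  (∀ G ∈ γ, G.Nonempty) ∧
  ∀ U : Set X, IsOpen U → U.Nonempty → ∃ G ∈ γ, G ⊆ U

/-- A family `γ` of subsets is a π-base for a space: all members are nonempty open sets
and every nonempty open set contains a member. -/
def IsPiBase {X : Type*} [TopologicalSpace X] (γ : Set (Set X)) : Prop :=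
  (∀ G ∈ γ, IsOpen G ∧ G.Nonempty) ∧
  ∀ U : Set X, IsOpen U → U.Nonempty → ∃ G ∈ γ, G ⊆ U

/-- A π-space: there is an open Souslin scheme that partitions the space, has strict
branches, and whose family of members is a π-base. -/
def IsPiSpace (X : Type*) [TopologicalSpace X] : Prop :=
  ∃ V : List ℕ → Set X, OpenScheme V ∧ Partitions V Set.univ ∧ StrictBranches V ∧
    IsPiBase {S : Set X | ∃ a : List ℕ, S = V a}

/-- A Lusin π-base for a space. -/
def IsLusinPiBase {X : Type*} [TopologicalSpace X] (V : List ℕ → Set X) : Prop :=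
  OpenScheme V ∧ Partitions V Set.univ ∧ StrictBranches V ∧
  ∀ (x : X) (U : Set X), IsOpen U → x ∈ U →
    ∃ (a : List ℕ) (n : ℕ), x ∈ V a ∧ (⋃ i : ℕ, ⋃ _ : n ≤ i, V (a ++ [i])) ⊆ U

/-- A map is quasi-open iff the image of every nonempty open set has nonempty interior. -/
def IsQuasiOpen {X Y : Type*} [TopologicalSpace X] [TopologicalSpace Y] (f : X → Y) : Prop :=
  ∀ U : Set X, IsOpen U → U.Nonempty → (interior (f '' U)).Nonempty

/-- A π-net Souslin scheme on a space `X`: for every finite sequence `a`, the family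
`{V b : b ⊒ a}` is a π-net for the subspace `V a` of `X` (whose nonempty open sets are
exactly the nonempty sets `U ∩ V a` with `U` open in `X`). -/
def IsPiNetScheme {X : Type*} [TopologicalSpace X] (V : List ℕ → Set X) : Prop :=
  ∀ a : List ℕ,
    (∀ b : List ℕ, a <+: b → (V b).Nonempty) ∧
    ∀ U : Set X, IsOpen U → (U ∩ V a).Nonempty → ∃ b : List ℕ, a <+: b ∧ V b ⊆ U ∩ V a

/-- A π-base Souslin scheme on a space is an open π-net Souslin scheme. -/
def IsPiBaseScheme {X : Type*} [TopologicalSpace X] (V : List ℕ → Set X) : Prop :=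
  OpenScheme V ∧ IsPiNetScheme V

/-- A selector on a Souslin scheme `V`: a surjection of the Baire space onto `flesh V`
such that every fiber `f⁻¹(x)` is a dense subset of the subspace `branches V x` of the
Baire space. -/
def IsSelector {X : Type*} (V : List ℕ → Set X) (f : (ℕ → ℕ) → X) : Prop :=
  Set.range f = flesh V ∧
  ∀ x ∈ flesh V, f ⁻¹' {x} ⊆ branches V x ∧ branches V x ⊆ closure (f ⁻¹' {x})

/-- The topology `σ_{τ,f}` on the Baire space, generated by the subbase consisting of the
`τ`-preimages under `f` together with the basic sets `S_a`. -/
def sigmaTop {X : Type*} [TopologicalSpace X] (f : (ℕ → ℕ) → X) :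
    TopologicalSpace (ℕ → ℕ) :=
  TopologicalSpace.generateFrom
    ({S : Set (ℕ → ℕ) | ∃ U : Set X, IsOpen U ∧ S = f ⁻¹' U} ∪
      {S : Set (ℕ → ℕ) | ∃ a : List ℕ, S = cyl a})

/-- The Souslin scheme `V^g`, where `V^g_a = V_{g ∘ a}`. -/
def schemeComp {X : Type*} (V : List ℕ → Set X) (g : ℕ → ℕ) : List ℕ → Set X :=
  fun a => V (a.map g)

/-- A subset of the Baire space is dense-in-itself iff it has no isolated points. -/
def DenseInItself (B : Set (ℕ → ℕ)) : Prop :=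
  ∀ q ∈ B, q ∈ closure (B \ {q})

/-- `X` is a continuous open image of a π-space. -/
def IsContinuousOpenImageOfPiSpace (X : Type) [TopologicalSpace X] : Prop :=
  ∃ (Y : Type) (_ : TopologicalSpace Y) (f : Y → X),
    IsPiSpace Y ∧ Continuous f ∧ IsOpenMap f ∧ Function.Surjective f

/-- The topology `τ_N` on the Baire space generated by the sets `U \ A` with `U` open in
the Baire space and `A` nowhere dense in the Baire space. -/
def tauN : TopologicalSpace (ℕ → ℕ) :=
  TopologicalSpace.generateFrom
    {S : Set (ℕ → ℕ) | ∃ U A : Set (ℕ → ℕ), IsOpen U ∧ IsNowhereDense A ∧ S = U \ A}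

/-! ### Auxiliary lemmas -/

@[simp] lemma restrictSeq_length (p : ℕ → ℕ) (n : ℕ) : (restrictSeq p n).length = n := by
  simp [restrictSeq]

lemma restrictSeq_succ (p : ℕ → ℕ) (n : ℕ) :
    restrictSeq p (n+1) = restrictSeq p n ++ [p n] := by
  simp [restrictSeq, List.range_succ]

lemma restrictSeq_getElem (p : ℕ → ℕ) {n i : ℕ} (h : i < n) :
    (restrictSeq p n)[i]'(by simpa using h) = p i := by
  simp [restrictSeq]

lemma restrictSeq_take (p : ℕ → ℕ) {m n : ℕ} (h : m ≤ n) :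
    (restrictSeq p n).take m = restrictSeq p m := by
  simp [restrictSeq, ← List.map_take, List.take_range, Nat.min_eq_left h]

lemma restrictSeq_prefix (p : ℕ → ℕ) {m n : ℕ} (h : m ≤ n) :
    restrictSeq p m <+: restrictSeq p n := by
  rw [← restrictSeq_take p h]; exact List.take_prefix _ _

lemma ext_take {p : ℕ → ℕ} {u : List ℕ} (hu : restrictSeq p u.length = u) {m : ℕ}
    (hm : m ≤ u.length) : restrictSeq p m = u.take m := by
  rw [← restrictSeq_take p hm, hu]

lemma ext_of_prefix {p : ℕ → ℕ} {u v : List ℕ} (huv : u <+: v)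
    (hv : restrictSeq p v.length = v) : restrictSeq p u.length = u := by
  have h := List.prefix_iff_eq_take.mp huv
  rw [ext_take hv huv.length_le]
  exact h.symm

lemma prefix_of_ext {p : ℕ → ℕ} {u v : List ℕ} (hu : restrictSeq p u.length = u)
    (hv : restrictSeq p v.length = v) (h : u.length ≤ v.length) : u <+: v := by
  rw [List.prefix_iff_eq_take, ← hv, restrictSeq_take p h, hu]

lemma funext_of_restrict {q q' : ℕ → ℕ} (h : ∀ d, restrictSeq q d = restrictSeq q' d) :
    q = q' := by
  funext i
  have h1 := h (i+1)
  have h2 : (restrictSeq q (i+1))[i]'(by simp) = (restrictSeq q' (i+1))[i]'(by simp) := by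
    simp only [h1]
  rwa [restrictSeq_getElem q (Nat.lt_succ_self i), restrictSeq_getElem q' (Nat.lt_succ_self i)] at h2

lemma restrictSeq_getD (p : ℕ → ℕ) {n i : ℕ} (h : i < n) :
    (restrictSeq p n).getD i 0 = p i := by
  rw [List.getD_eq_getElem _ _ (by simpa using h)]
  exact restrictSeq_getElem p h

lemma restrictSeq_self (a : List ℕ) : restrictSeq (fun i => a.getD i 0) a.length = a := by
  apply List.ext_getElem (by simp)
  intro i h1 h2
  rw [restrictSeq_getElem _ h2]
  exact List.getD_eq_getElem a 0 h2

lemma cyl_compat (u v : List ℕ) :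
    u <+: v ∨ v <+: u ∨ ∀ p : ℕ → ℕ, ¬ (restrictSeq p u.length = u ∧ restrictSeq p v.length = v) := by
  by_cases h1 : u <+: v
  · exact Or.inl h1
  by_cases h2 : v <+: u
  · exact Or.inr (Or.inl h2)
  refine Or.inr (Or.inr fun p ⟨hu, hv⟩ => ?_)
  rcases le_total u.length v.length with h | h
  · exact h1 (prefix_of_ext hu hv h)
  · exact h2 (prefix_of_ext hv hu h)

section Scheme

variable {Y : Type} {V : List ℕ → Set Y}

lemma V_child_subset (hP : Partitions V Set.univ) (a : List ℕ) (n : ℕ) :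
    V (a ++ [n]) ⊆ V a := by
  rw [hP.1.2 a]
  exact Set.subset_iUnion (fun n => V (a ++ [n])) n

lemma V_mono (hP : Partitions V Set.univ) {u v : List ℕ} (h : u <+: v) : V v ⊆ V u := by
  obtain ⟨t, rfl⟩ := h
  induction t using List.reverseRecOn with
  | nil => simp
  | append_singleton t n ih =>
    have h1 := V_child_subset hP (u ++ t) n
    rw [List.append_assoc] at h1
    exact h1.trans ih

noncomputable def xpt (hS : StrictBranches V) (p : ℕ → ℕ) : Y := (hS p).choose

lemma fruit_eq_xpt (hS : StrictBranches V) (p : ℕ → ℕ) : fruit V p = {xpt hS p} :=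
  (hS p).choose_spec

lemma xpt_mem (hS : StrictBranches V) (p : ℕ → ℕ) (n : ℕ) :
    xpt hS p ∈ V (restrictSeq p n) := by
  have h : xpt hS p ∈ fruit V p := by rw [fruit_eq_xpt]; rfl
  exact Set.mem_iInter.mp h n

lemma eq_xpt (hS : StrictBranches V) {p : ℕ → ℕ} {x : Y}
    (h : ∀ n, x ∈ V (restrictSeq p n)) : x = xpt hS p := by
  have hx : x ∈ fruit V p := Set.mem_iInter.mpr h
  rw [fruit_eq_xpt hS] at hx
  exact hx

lemma V_nonempty (hS : StrictBranches V) (a : List ℕ) : (V a).Nonempty := by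
  refine ⟨xpt hS (fun i => a.getD i 0), ?_⟩
  have h := xpt_mem hS (fun i => a.getD i 0) a.length
  rwa [restrictSeq_self] at h

lemma eq_of_mem_same_length (hP : Partitions V Set.univ) {x : Y} :
    ∀ (n : ℕ) {u v : List ℕ}, u.length = n → v.length = n →
      x ∈ V u → x ∈ V v → u = v := by
  intro n
  induction n with
  | zero =>
    intro u v hu hv _ _
    rw [List.length_eq_zero_iff] at hu hv; rw [hu, hv]
  | succ n ih =>
    intro u v hu hv hxu hxv
    rcases u.eq_nil_or_concat with rfl | ⟨u', i, rfl⟩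
    · simp at hu
    rcases v.eq_nil_or_concat with rfl | ⟨v', j, rfl⟩
    · simp at hv
    rw [List.concat_eq_append] at *
    simp at hu hv
    have h1 : u' = v' := ih hu hv (V_child_subset hP u' i hxu) (V_child_subset hP v' j hxv)
    subst h1
    by_cases hij : i = j
    · simp [hij, List.concat_eq_append]
    · exfalso
      have := hP.2 u' i j hij
      have : x ∈ V (u' ++ [i]) ∩ V (u' ++ [j]) := ⟨hxu, hxv⟩
      rw [hP.2 u' i j hij] at this
      exact this

lemma prefix_of_mem (hP : Partitions V Set.univ) {x : Y} {u v : List ℕ}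
    (hxu : x ∈ V u) (hxv : x ∈ V v) (h : u.length ≤ v.length) : u <+: v := by
  have h1 : x ∈ V (v.take u.length) := V_mono hP (List.take_prefix _ _) hxv
  have h2 : u = v.take u.length :=
    eq_of_mem_same_length hP u.length rfl (by simp [h]) hxu h1
  rw [List.prefix_iff_eq_take]; exact h2

lemma exists_branch (hP : Partitions V Set.univ) (hS : StrictBranches V) {a : List ℕ} {x : Y}
    (hx : x ∈ V a) : ∃ p : ℕ → ℕ, restrictSeq p a.length = a ∧ x = xpt hS p := by
  have step : ∀ u : List ℕ, x ∈ V u → ∃ n, x ∈ V (u ++ [n]) := by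
    intro u hu; rw [hP.1.2 u] at hu; exact Set.mem_iUnion.mp hu
  let F : (n : ℕ) → {l : List ℕ // l.length = a.length + n ∧ a <+: l ∧ x ∈ V l} :=
    fun n => Nat.rec ⟨a, by simp, List.prefix_refl a, hx⟩
      (fun n ih => ⟨ih.1 ++ [(step ih.1 ih.2.2.2).choose],
        by simp [ih.2.1, Nat.add_assoc],
        ih.2.2.1.trans (List.prefix_append _ _),
        (step ih.1 ih.2.2.2).choose_spec⟩) n
  have Fsucc : ∀ n, (F n).1 <+: (F (n+1)).1 := fun n => List.prefix_append _ _
  have Fchain : ∀ {n m : ℕ}, n ≤ m → (F n).1 <+: (F m).1 := by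
    intro n m h
    induction h with
    | refl => exact List.prefix_refl _
    | step h ih => exact ih.trans (Fsucc _)
  set p : ℕ → ℕ := fun i => (F (i+1)).1.getD i 0 with hp
  have key : ∀ n, restrictSeq p ((F n).1.length) = (F n).1 := by
    intro n
    apply List.ext_getElem (by simp)
    intro i h1 h2
    have hi : i < (F n).1.length := h2
    have hpi : p i = (F (i+1)).1.getD i 0 := rfl
    have hilt : i < (F (i+1)).1.length := by rw [(F (i+1)).2.1]; omega
    have hgd : p i = (F (i+1)).1[i]'hilt := by
      rw [hpi, List.getD_eq_getElem _ _ hilt]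
    rw [restrictSeq_getElem p h2, hgd]
    rcases le_total (i+1) n with h | h
    · exact (Fchain h).getElem hilt
    · exact ((Fchain h).getElem hi).symm
  have hFl : ∀ n, (F n).1.length = a.length + n := fun n => (F n).2.1
  refine ⟨p, ?_, ?_⟩
  · have h0 := key 0
    have : (F 0).1 = a := rfl
    rwa [this] at h0
  · apply eq_xpt hS
    intro m
    have h1 : restrictSeq p m = (F m).1.take m := by
      have := ext_take (key m) (m := m) (by rw [hFl]; omega)
      exact this
    rw [h1]
    exact V_mono hP (List.take_prefix _ _) (F m).2.2.2

lemma xpt_image (hP : Partitions V Set.univ) (hS : StrictBranches V) (w : List ℕ) :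
    xpt hS '' {p | restrictSeq p w.length = w} = V w := by
  apply Set.Subset.antisymm
  · rintro _ ⟨p, hp, rfl⟩
    have := xpt_mem hS p w.length
    rwa [hp] at this
  · intro x hx
    obtain ⟨p, hp1, hp2⟩ := exists_branch hP hS hx
    exact ⟨p, hp1, hp2.symm⟩

end Scheme
section Construction

variable {X Y : Type} [TopologicalSpace X] [TopologicalSpace Y]

lemma chain_restrict {L : ℕ → List ℕ} (hlen : ∀ n, (L n).length = n)
    (hch : ∀ n, L n <+: L (n+1)) :
    ∀ n, restrictSeq (fun i => (L (i+1)).getD i 0) n = L n := by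
  have hchain : ∀ {n m : ℕ}, n ≤ m → L n <+: L m := by
    intro n m h
    induction h with
    | refl => exact List.prefix_refl _
    | step h ih => exact ih.trans (hch _)
  intro n
  apply List.ext_getElem (by simp [hlen])
  intro i h1 h2
  have h2' : i < n := by simpa using h1
  rw [restrictSeq_getElem _ h2']
  have hi1 : i < (L (i+1)).length := by rw [hlen]; omega
  have hin : i < (L n).length := by rw [hlen]; exact h2'
  show (L (i+1)).getD i 0 = (L n)[i]'hin
  rw [List.getD_eq_getElem _ _ hi1]
  rcases le_total (i+1) n with h | h
  · exact (hchain h).getElem hi1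
  · exact ((hchain h).getElem hin).symm

/-- Index coder for odd levels. -/
def jd (d : ℕ) : ℕ := (Nat.unpair ((d-1)/2)).1

lemma jd_spec (j k : ℕ) : (2 * Nat.pair j k + 1) % 2 = 1 ∧ jd (2 * Nat.pair j k + 1) = j ∧
    k ≤ 2 * Nat.pair j k + 1 := by
  refine ⟨by omega, ?_, ?_⟩
  · unfold jd
    have : (2 * Nat.pair j k + 1 - 1) / 2 = Nat.pair j k := by omega
    rw [this, Nat.unpair_pair]
  · have := Nat.right_le_pair j k
    omega

open Classical in
noncomputable def stepF (f : Y → X) (V : List ℕ → Set Y) (B : ℕ → Set X)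
    (cur : List ℕ) (d n : ℕ) : List ℕ :=
  if d % 2 = 0 then cur ++ [n]
  else if h : ∃ s, cur <+: s ∧ f '' V s ⊆ B (jd d) then
    (if n = 0 then cur else h.choose ++ List.replicate (n-1) 0)
  else cur

noncomputable def crecF (f : Y → X) (V : List ℕ → Set Y) (B : ℕ → Set X) : List ℕ → List ℕ
  | [] => []
  | n :: rest => stepF f V B (crecF f V B rest) rest.length n

noncomputable def cListF (f : Y → X) (V : List ℕ → Set Y) (B : ℕ → Set X) (a : List ℕ) :
    List ℕ := crecF f V B a.reverse

variable {f : Y → X} {V : List ℕ → Set Y} {B : ℕ → Set X}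

lemma cListF_nil : cListF f V B [] = [] := rfl

lemma cListF_append (a : List ℕ) (n : ℕ) :
    cListF f V B (a ++ [n]) = stepF f V B (cListF f V B a) a.length n := by
  show crecF f V B (a ++ [n]).reverse = _
  rw [List.reverse_append]
  show stepF f V B (crecF f V B a.reverse) a.reverse.length n = _
  rw [List.length_reverse]
  rfl

lemma stepF_prefix (cur : List ℕ) (d n : ℕ) : cur <+: stepF f V B cur d n := by
  unfold stepF
  split
  · exact List.prefix_append _ _
  · split
    · rename_i h
      split
      · exact List.prefix_refl _
      · exact h.choose_spec.1.trans (List.prefix_append _ _)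
    · exact List.prefix_refl _

lemma stepF_even (cur : List ℕ) {d : ℕ} (hd : d % 2 = 0) (n : ℕ) :
    stepF f V B cur d n = cur ++ [n] := by
  unfold stepF; rw [if_pos hd]

lemma stepF_zero_odd (cur : List ℕ) {d : ℕ} (hd : ¬ d % 2 = 0) :
    stepF f V B cur d 0 = cur := by
  unfold stepF
  rw [if_neg hd]
  split
  · rw [if_pos rfl]
  · rfl

lemma stepF_odd_small (hP : Partitions V Set.univ) (cur : List ℕ) {d n : ℕ}
    (hd : ¬ d % 2 = 0) (h : ∃ s, cur <+: s ∧ f '' V s ⊆ B (jd d)) (hn : 1 ≤ n) :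
    f '' V (stepF f V B cur d n) ⊆ B (jd d) := by
  unfold stepF
  rw [if_neg hd, dif_pos h, if_neg (by omega : ¬ n = 0)]
  exact (Set.image_mono (V_mono hP (List.prefix_append _ _))).trans h.choose_spec.2

lemma cListF_mono {a a' : List ℕ} (h : a <+: a') : cListF f V B a <+: cListF f V B a' := by
  obtain ⟨t, rfl⟩ := h
  induction t using List.reverseRecOn with
  | nil => simp
  | append_singleton t n ih =>
    rw [← List.append_assoc, cListF_append]
    exact ih.trans (stepF_prefix _ _ _)

lemma cListF_length (a : List ℕ) : (a.length + 1) / 2 ≤ (cListF f V B a).length := by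
  induction a using List.reverseRecOn with
  | nil => simp [cListF_nil]
  | append_singleton a n ih =>
    rw [cListF_append]
    by_cases hd : a.length % 2 = 0
    · rw [stepF_even _ hd]
      simp only [List.length_append, List.length_cons, List.length_nil]
      omega
    · have hle := (stepF_prefix (f := f) (V := V) (B := B) (cur := cListF f V B a) a.length n).length_le
      have hlen : (a ++ [n]).length = a.length + 1 := by simp
      rw [hlen]
      have hodd : a.length % 2 = 1 := by omega
      omega

def HonF (f : Y → X) (V : List ℕ → Set Y) (B : ℕ → Set X) (z : (ℕ → ℕ) × (ℕ → ℕ)) : Prop :=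
  ∀ d, restrictSeq z.1 (cListF f V B (restrictSeq z.2 d)).length = cListF f V B (restrictSeq z.2 d)

lemma hon_extend (e : List ℕ) (p : ℕ → ℕ)
    (hp : restrictSeq p (cListF f V B e).length = cListF f V B e) :
    ∃ ε : ℕ → ℕ, HonF f V B (p, ε) ∧ restrictSeq ε e.length = e := by
  let E : ℕ → List ℕ := fun d => Nat.rec []
    (fun d Ed => Ed ++ [if d < e.length then e.getD d 0
      else if d % 2 = 0 then p (cListF f V B Ed).length else 0]) d
  have Esucc : ∀ d, E (d+1) = E d ++ [if d < e.length then e.getD d 0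
      else if d % 2 = 0 then p (cListF f V B (E d)).length else 0] := by
    intro d
    rfl
  have Elen : ∀ d, (E d).length = d := by
    intro d
    induction d with
    | zero => rfl
    | succ d ih => rw [Esucc]; simp [ih]
  have Ech : ∀ d, E d <+: E (d+1) := by
    intro d; rw [Esucc]; exact List.prefix_append _ _
  have Etake : ∀ d, d ≤ e.length → E d = e.take d := by
    intro d
    induction d with
    | zero => intro _; rfl
    | succ d ih =>
      intro hd
      rw [Esucc, ih (by omega), if_pos (by omega : d < e.length)]
      rw [List.getD_eq_getElem _ _ (by omega : d < e.length)]
      rw [← List.take_concat_get (by omega : d < e.length), List.concat_eq_append]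
  have hon : ∀ d, restrictSeq p (cListF f V B (E d)).length = cListF f V B (E d) := by
    intro d
    induction d with
    | zero => rfl
    | succ d ih =>
      by_cases hd : d < e.length
      · have h1 : E (d+1) = e.take (d+1) := Etake (d+1) (by omega)
        rw [h1]
        exact ext_of_prefix (cListF_mono (List.take_prefix _ _)) hp
      · rw [Esucc, if_neg hd]
        by_cases hpar : d % 2 = 0
        · rw [if_pos hpar, cListF_append, Elen, stepF_even _ hpar]
          have : (cListF f V B (E d) ++ [p (cListF f V B (E d)).length]).length
              = (cListF f V B (E d)).length + 1 := by simp
          rw [this, restrictSeq_succ, ih]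
        · rw [if_neg hpar, cListF_append, Elen, stepF_zero_odd _ hpar]
          exact ih
  refine ⟨fun i => (E (i+1)).getD i 0, ?_, ?_⟩
  · intro d
    show restrictSeq p (cListF f V B (restrictSeq _ d)).length = _
    rw [chain_restrict Elen Ech d]
    exact hon d
  · rw [chain_restrict Elen Ech e.length, Etake e.length le_rfl, List.take_length]

end Construction
section Main

variable {X Y : Type} [TopologicalSpace X] [TopologicalSpace Y]

/-- The underlying set of the auxiliary space: honest pairs. -/
def ZT (f : Y → X) (V : List ℕ → Set Y) (B : ℕ → Set X) : Type :=
  {z : (ℕ → ℕ) × (ℕ → ℕ) // HonF f V B z}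

variable {f : Y → X} {V : List ℕ → Set Y} {B : ℕ → Set X}

noncomputable def psiF (hS : StrictBranches V) (B : ℕ → Set X) : ZT f V B → X :=
  fun z => f (xpt hS z.1.1)

/-- The generating family for the topology on `ZT`. -/
def SBF (hS : StrictBranches V) (B : ℕ → Set X) : Set (Set (ZT f V B)) :=
  {T | ∃ (G : Set X) (b e : List ℕ), IsOpen G ∧
    T = {z : ZT f V B | psiF hS B z ∈ G ∧ restrictSeq z.1.1 b.length = b ∧
          restrictSeq z.1.2 e.length = e}}

/-- The Lusin scheme on `ZT`. -/
def WF (f : Y → X) (V : List ℕ → Set Y) (B : ℕ → Set X) : List ℕ → Set (ZT f V B) :=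
  fun a => {z | restrictSeq z.1.2 a.length = a ∧
    restrictSeq z.1.1 (cListF f V B a).length = cListF f V B a}

lemma SB_univ (hS : StrictBranches V) : Set.univ ∈ SBF (f := f) hS B := by
  refine ⟨Set.univ, [], [], isOpen_univ, ?_⟩
  ext z
  simp [restrictSeq]

lemma cyl_inter (u v : List ℕ) :
    (∃ w : List ℕ, ∀ p : ℕ → ℕ,
      ((restrictSeq p u.length = u ∧ restrictSeq p v.length = v) ↔ restrictSeq p w.length = w))
    ∨ (∀ p : ℕ → ℕ, ¬(restrictSeq p u.length = u ∧ restrictSeq p v.length = v)) := by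
  rcases cyl_compat u v with h | h | h
  · exact Or.inl ⟨v, fun p => ⟨fun hh => hh.2, fun hv => ⟨ext_of_prefix h hv, hv⟩⟩⟩
  · exact Or.inl ⟨u, fun p => ⟨fun hh => hh.1, fun hu => ⟨hu, ext_of_prefix h hu⟩⟩⟩
  · exact Or.inr h

lemma SB_inter (hS : StrictBranches V) :
    ∀ T1 ∈ SBF (f := f) hS B, ∀ T2 ∈ SBF (f := f) hS B, T1 ∩ T2 ∈ SBF (f := f) hS B := by
  rintro T1 ⟨G1, b1, e1, hG1, rfl⟩ T2 ⟨G2, b2, e2, hG2, rfl⟩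
  rcases cyl_inter b1 b2 with ⟨wb, hwb⟩ | hbad
  · rcases cyl_inter e1 e2 with ⟨we, hwe⟩ | hebad
    · refine ⟨G1 ∩ G2, wb, we, hG1.inter hG2, ?_⟩
      ext z
      constructor
      · rintro ⟨⟨h1, h2, h3⟩, ⟨h4, h5, h6⟩⟩
        exact ⟨⟨h1, h4⟩, (hwb z.1.1).mp ⟨h2, h5⟩, (hwe z.1.2).mp ⟨h3, h6⟩⟩
      · rintro ⟨⟨h1, h4⟩, h2, h3⟩
        obtain ⟨hb1, hb2⟩ := (hwb z.1.1).mpr h2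
        obtain ⟨he1, he2⟩ := (hwe z.1.2).mpr h3
        exact ⟨⟨h1, hb1, he1⟩, ⟨h4, hb2, he2⟩⟩
    · refine ⟨∅, [], [], isOpen_empty, ?_⟩
      ext z
      constructor
      · rintro ⟨⟨_, _, h3⟩, ⟨_, _, h6⟩⟩
        exact absurd ⟨h3, h6⟩ (hebad z.1.2)
      · rintro ⟨h, _, _⟩
        exact absurd h (Set.notMem_empty _)
  · refine ⟨∅, [], [], isOpen_empty, ?_⟩
    ext z
    constructor
    · rintro ⟨⟨_, h2, _⟩, ⟨_, h5, _⟩⟩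
      exact absurd ⟨h2, h5⟩ (hbad z.1.1)
    · rintro ⟨h, _, _⟩
      exact absurd h (Set.notMem_empty _)

lemma gen_basis {α : Type} {S : Set (Set α)} (hU : Set.univ ∈ S)
    (hI : ∀ T1 ∈ S, ∀ T2 ∈ S, T1 ∩ T2 ∈ S) {O : Set α}
    (hO : TopologicalSpace.GenerateOpen S O) : ∀ z ∈ O, ∃ T ∈ S, z ∈ T ∧ T ⊆ O := by
  induction hO with
  | basic T hT => exact fun z hz => ⟨T, hT, hz, subset_rfl⟩
  | univ => exact fun z hz => ⟨Set.univ, hU, hz, subset_rfl⟩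
  | inter O1 O2 _ _ ih1 ih2 =>
    intro z hz
    obtain ⟨T1, hT1, hz1, hs1⟩ := ih1 z hz.1
    obtain ⟨T2, hT2, hz2, hs2⟩ := ih2 z hz.2
    exact ⟨T1 ∩ T2, hI T1 hT1 T2 hT2, ⟨hz1, hz2⟩, Set.inter_subset_inter hs1 hs2⟩
  | sUnion ts _ ih =>
    intro z hz
    obtain ⟨O', hO', hzO⟩ := hz
    obtain ⟨T, hT, hzT, hs⟩ := ih O' hO' z hzO
    exact ⟨T, hT, hzT, hs.trans (Set.subset_sUnion_of_mem hO')⟩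

lemma W_mem_SB (hS : StrictBranches V) (a : List ℕ) : WF f V B a ∈ SBF (f := f) hS B := by
  refine ⟨Set.univ, cListF f V B a, a, isOpen_univ, ?_⟩
  ext z
  simp only [WF, Set.mem_setOf_eq, Set.mem_univ, true_and]
  tauto

lemma W_partitions : Partitions (WF f V B) Set.univ := by
  refine ⟨⟨?_, ?_⟩, ?_⟩
  · ext z
    simp [WF, cListF_nil, restrictSeq]
  · intro a
    ext z
    simp only [WF, Set.mem_setOf_eq, Set.mem_iUnion]
    constructor
    · rintro ⟨h1, _⟩
      refine ⟨z.1.2 a.length, ?_, ?_⟩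
      · have hlen : (a ++ [z.1.2 a.length]).length = a.length + 1 := by simp
        rw [hlen, restrictSeq_succ, h1]
      · have h3 := z.2 (a.length + 1)
        have h4 : restrictSeq z.1.2 (a.length + 1) = a ++ [z.1.2 a.length] := by
          rw [restrictSeq_succ, h1]
        rwa [h4] at h3
    · rintro ⟨n, h1, h2⟩
      have hpre : a <+: a ++ [n] := List.prefix_append _ _
      exact ⟨ext_of_prefix hpre h1, ext_of_prefix (cListF_mono hpre) h2⟩
  · intro a n m hnm
    rw [Set.eq_empty_iff_forall_notMem]
    rintro z ⟨⟨h1, _⟩, ⟨h2, _⟩⟩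
    have hlen : (a ++ [n]).length = (a ++ [m]).length := by simp
    rw [← hlen] at h2
    rw [h1] at h2
    exact hnm (by simpa using List.append_cancel_left h2)

lemma W_strict : StrictBranches (WF f V B) := by
  intro β
  set L : ℕ → List ℕ := fun d => cListF f V B (restrictSeq β d) with hL
  have Lch : ∀ {d d' : ℕ}, d ≤ d' → L d <+: L d' :=
    fun h => cListF_mono (restrictSeq_prefix β h)
  have Llen : ∀ d, (d + 1) / 2 ≤ (L d).length := by
    intro d
    have := cListF_length (f := f) (V := V) (B := B) (restrictSeq β d)
    rwa [restrictSeq_length] at this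
  set q : ℕ → ℕ := fun i => (L (2*i+2)).getD i 0 with hq
  have hiL : ∀ i : ℕ, i < (L (2*i+2)).length := by
    intro i
    have := Llen (2*i+2)
    omega
  have pc : ∀ d, restrictSeq q ((L d).length) = L d := by
    intro d
    apply List.ext_getElem (by simp)
    intro i h1 h2
    have h2' : i < (L d).length := h2
    rw [restrictSeq_getElem q h2]
    show (L (2*i+2)).getD i 0 = (L d)[i]'h2'
    rw [List.getD_eq_getElem _ _ (hiL i)]
    rcases le_total d (2*i+2) with h | h
    · exact ((Lch h).getElem h2').symm
    · exact (Lch h).getElem (hiL i)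
  have hon : HonF f V B (fun i => (L (2*i+2)).getD i 0, β) := fun d => pc d
  refine ⟨⟨(fun i => (L (2*i+2)).getD i 0, β), hon⟩, ?_⟩
  ext z
  simp only [fruit, Set.mem_iInter, Set.mem_singleton_iff]
  constructor
  · intro hz
    have hε : z.1.2 = β := by
      apply funext_of_restrict
      intro d
      have := (hz d).1
      rwa [restrictSeq_length] at this
    have hp : z.1.1 = fun i => (L (2*i+2)).getD i 0 := by
      funext i
      have h2 := (hz (2*i+2)).2
      have h2' : restrictSeq z.1.1 (L (2*i+2)).length = L (2*i+2) := h2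
      have h3 : z.1.1 i = (L (2*i+2))[i]'(hiL i) := by
        have h4 := restrictSeq_getElem z.1.1 (n := (L (2*i+2)).length) (hiL i)
        exact h4.symm.trans (List.getElem_of_eq h2' _)
      rw [h3, List.getD_eq_getElem _ _ (hiL i)]
    apply Subtype.ext
    apply Prod.ext hp hε
  · rintro rfl
    intro d
    constructor
    · rw [restrictSeq_length]
    · exact pc d

end Main
section Final

variable {X Y : Type} [TopologicalSpace X] [TopologicalSpace Y]
variable {f : Y → X} {V : List ℕ → Set Y} {B : ℕ → Set X}

lemma psi_image (hP : Partitions V Set.univ) (hS : StrictBranches V) (hOV : OpenScheme V)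
    (hfo : IsOpenMap f) {G : Set X} (hG : IsOpen G) (b e : List ℕ) :
    IsOpen (psiF (f := f) hS B ''
      {z : ZT f V B | psiF hS B z ∈ G ∧ restrictSeq z.1.1 b.length = b ∧
        restrictSeq z.1.2 e.length = e}) := by
  set T := {z : ZT f V B | psiF hS B z ∈ G ∧ restrictSeq z.1.1 b.length = b ∧
        restrictSeq z.1.2 e.length = e} with hT
  rcases cyl_inter b (cListF f V B e) with ⟨w, hw⟩ | hbad
  · have him : psiF (f := f) hS B '' T = G ∩ f '' V w := by
      apply Set.Subset.antisymm
      · rintro x ⟨z, ⟨hG', hb, he⟩, rfl⟩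
        have hce : restrictSeq z.1.1 (cListF f V B e).length = cListF f V B e := by
          have h := z.2 e.length
          rwa [he] at h
        have hww := (hw z.1.1).mp ⟨hb, hce⟩
        have hx : xpt hS z.1.1 ∈ V w := by
          have h := xpt_mem hS z.1.1 w.length
          rwa [hww] at h
        exact ⟨hG', ⟨xpt hS z.1.1, hx, rfl⟩⟩
      · rintro x ⟨hxG, y, hyVw, rfl⟩
        obtain ⟨p, hp1, hp2⟩ := exists_branch hP hS hyVw
        obtain ⟨hb', hce'⟩ := (hw p).mpr hp1
        obtain ⟨ε, hhon, hεe⟩ := hon_extend e p hce'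
        refine ⟨⟨(p, ε), hhon⟩, ⟨?_, hb', hεe⟩, ?_⟩
        · show f (xpt hS p) ∈ G
          rw [← hp2]; exact hxG
        · show f (xpt hS p) = f y
          rw [← hp2]
    rw [him]
    exact hG.inter (hfo _ (hOV w))
  · have him : psiF (f := f) hS B '' T = ∅ := by
      rw [Set.eq_empty_iff_forall_notMem]
      rintro x ⟨z, ⟨_, hb, he⟩, rfl⟩
      have hce : restrictSeq z.1.1 (cListF f V B e).length = cListF f V B e := by
        have h := z.2 e.length
        rwa [he] at h
      exact hbad z.1.1 ⟨hb, hce⟩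
    rw [him]
    exact isOpen_empty

end Final

lemma lusin_to_pispace {Y : Type} [TopologicalSpace Y] {V : List ℕ → Set Y}
    (hL : IsLusinPiBase V) : IsPiSpace Y := by
  obtain ⟨hO, hP, hS, hLu⟩ := hL
  refine ⟨V, hO, hP, hS, ?_, ?_⟩
  · rintro G ⟨a, rfl⟩
    exact ⟨hO a, V_nonempty hS a⟩
  · rintro U hU ⟨x, hx⟩
    obtain ⟨a, n, hxa, hsub⟩ := hLu x U hU hx
    refine ⟨V (a ++ [n]), ⟨a ++ [n], rfl⟩, fun y hy => hsub ?_⟩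
    exact Set.mem_iUnion.mpr ⟨n, Set.mem_iUnion.mpr ⟨le_rfl, hy⟩⟩
/-- A nonempty second-countable space is a continuous open image of a
π-space iff it is a continuous open image of a space with a Lusin π-base. -/
theorem statement10 {X : Type} [TopologicalSpace X] [SecondCountableTopology X]
    [Nonempty X] :
    IsContinuousOpenImageOfPiSpace X ↔
    ∃ (Y : Type) (_ : TopologicalSpace Y) (f : Y → X),
      (∃ V : List ℕ → Set Y, IsLusinPiBase V) ∧
      Continuous f ∧ IsOpenMap f ∧ Function.Surjective f := by
  constructor
  · rintro ⟨Y, tY, f, ⟨V, hOV, hP, hS, hPB⟩, hfc, hfo, hfs⟩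
    letI := tY
    obtain ⟨bb, hbc, hbne, hbB⟩ := TopologicalSpace.exists_countable_basis X
    have hbnonempty : bb.Nonempty := by
      obtain ⟨x⟩ := ‹Nonempty X›
      have hx : x ∈ ⋃₀ bb := by rw [hbB.sUnion_eq]; trivial
      obtain ⟨t, ht, _⟩ := hx
      exact ⟨t, ht⟩
    obtain ⟨B, hB⟩ := hbc.exists_eq_range hbnonempty
    have hBopen : ∀ j, IsOpen (B j) := fun j =>
      hbB.isOpen (by rw [hB]; exact Set.mem_range_self j)
    have hBnbhd : ∀ (x : X) (G : Set X), IsOpen G → x ∈ G → ∃ j, x ∈ B j ∧ B j ⊆ G := by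
      intro x G hG hx
      obtain ⟨v, hv, hxv, hvG⟩ := hbB.exists_subset_of_mem_open hx hG
      rw [hB] at hv
      obtain ⟨j, rfl⟩ := hv
      exact ⟨j, hxv, hvG⟩
    refine ⟨ZT f V B, TopologicalSpace.generateFrom (SBF hS B), psiF hS B,
      ⟨WF f V B, ?_, W_partitions, W_strict, ?_⟩, ?_, ?_, ?_⟩
    · -- open scheme
      intro a
      exact TopologicalSpace.GenerateOpen.basic _ (W_mem_SB hS a)
    · -- Lusin property
      intro z U hU hzU
      obtain ⟨T, hTS, hzT, hTU⟩ := gen_basis (SB_univ hS) (SB_inter hS) hU z hzU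
      obtain ⟨G, b, e, hG, rfl⟩ := hTS
      obtain ⟨hzG, hzb, hze⟩ := hzT
      obtain ⟨j, hxB, hBG⟩ := hBnbhd _ G hG hzG
      obtain ⟨hdodd, hdj, hdk⟩ := jd_spec j (max (2 * b.length) e.length)
      set d := 2 * Nat.pair j (max (2 * b.length) e.length) + 1 with hd
      have hk1 : 2 * b.length ≤ d := le_trans (le_max_left _ _) hdk
      have hk2 : e.length ≤ d := le_trans (le_max_right _ _) hdk
      set a := restrictSeq z.1.2 d with ha
      have hale : a.length = d := restrictSeq_length _ _
      have hca : restrictSeq z.1.1 (cListF f V B a).length = cListF f V B a := z.2 d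
      have hcalen : b.length ≤ (cListF f V B a).length := by
        have h1 := cListF_length (f := f) (V := V) (B := B) a
        rw [hale] at h1
        omega
      have hzW : z ∈ WF f V B a := ⟨by rw [hale, ha], hca⟩
      have hx : xpt hS z.1.1 ∈ V (cListF f V B a) := by
        have h := xpt_mem hS z.1.1 (cListF f V B a).length
        rwa [hca] at h
      have hD : ∃ s, cListF f V B a <+: s ∧ f '' V s ⊆ B (jd a.length) := by
        rw [hale, hdj]
        have hopen : IsOpen (f ⁻¹' (B j) ∩ V (cListF f V B a)) :=
          ((hBopen j).preimage hfc).inter (hOV _)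
        have hne : (f ⁻¹' (B j) ∩ V (cListF f V B a)).Nonempty :=
          ⟨xpt hS z.1.1, hxB, hx⟩
        obtain ⟨S, hSmem, hSsub⟩ := hPB.2 _ hopen hne
        obtain ⟨s0, rfl⟩ := hSmem
        obtain ⟨y0, hy0⟩ := V_nonempty hS s0
        rcases le_total s0.length (cListF f V B a).length with h | h
        · refine ⟨cListF f V B a, List.prefix_refl _, ?_⟩
          rw [Set.image_subset_iff]
          have hpre : s0 <+: cListF f V B a := prefix_of_mem hP hy0 ((hSsub hy0).2) h
          exact (V_mono hP hpre).trans (hSsub.trans Set.inter_subset_left)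
        · refine ⟨s0, prefix_of_mem hP ((hSsub hy0).2) hy0 h, ?_⟩
          rw [Set.image_subset_iff]
          exact hSsub.trans Set.inter_subset_left
      refine ⟨a, 1, hzW, ?_⟩
      intro w hw
      simp only [Set.mem_iUnion] at hw
      obtain ⟨i, hi1, hw1, hw2⟩ := hw
      apply hTU
      have hcai : cListF f V B (a ++ [i]) = stepF f V B (cListF f V B a) a.length i :=
        cListF_append a i
      have hBsub : f '' V (cListF f V B (a ++ [i])) ⊆ B j := by
        rw [hcai, hale]
        have h := stepF_odd_small (f := f) (B := B) hP (cListF f V B a) (d := a.length)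
          (by rw [hale]; omega) hD hi1
        rwa [hale, hdj] at h
      refine ⟨?_, ?_, ?_⟩
      · have hxw : xpt hS w.1.1 ∈ V (cListF f V B (a ++ [i])) := by
          have h := xpt_mem hS w.1.1 (cListF f V B (a ++ [i])).length
          rwa [hw2] at h
        exact hBG (hBsub ⟨_, hxw, rfl⟩)
      · have hbca : b <+: cListF f V B a := prefix_of_ext hzb hca hcalen
        exact ext_of_prefix (hbca.trans (cListF_mono (List.prefix_append _ _))) hw2
      · have hea : e <+: a := by
          refine prefix_of_ext hze ?_ ?_
          · rw [hale, ha]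
          · rw [hale]; omega
        exact ext_of_prefix (hea.trans (List.prefix_append _ _)) hw1
    · -- continuity
      rw [continuous_def]
      intro G hG
      refine TopologicalSpace.GenerateOpen.basic _ ⟨G, [], [], hG, ?_⟩
      ext z
      simp [restrictSeq]
    · -- open map
      intro O hO
      rw [isOpen_iff_forall_mem_open]
      rintro x ⟨z, hzO, rfl⟩
      obtain ⟨T, hTS, hzT, hTU⟩ := gen_basis (SB_univ hS) (SB_inter hS) hO z hzO
      obtain ⟨G, b, e, hG, rfl⟩ := hTS
      exact ⟨psiF hS B '' _, Set.image_mono hTU,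
        psi_image hP hS hOV hfo hG b e, ⟨z, hzT, rfl⟩⟩
    · -- surjectivity
      intro x
      obtain ⟨y, rfl⟩ := hfs x
      have hy : y ∈ V [] := by rw [hP.1.1]; trivial
      obtain ⟨p, _, hp2⟩ := exists_branch hP hS hy
      obtain ⟨ε, hhon, _⟩ := hon_extend (f := f) (V := V) (B := B) [] p (by simp [cListF_nil, restrictSeq])
      exact ⟨⟨(p, ε), hhon⟩, by show f (xpt hS p) = f y; rw [← hp2]⟩
  · rintro ⟨Y, tY, g, ⟨W, hL⟩, hc, ho, hs⟩
    exact ⟨Y, tY, g, (letI := tY; lusin_to_pispace hL), hc, ho, hs⟩
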